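/- The stabilizer in O(2) of the polynomial x + xy is the trivial subgroup {Id}, and no polynomial of degree < 2 in ℝ[x,y] has trivial stabilizer in O(2). -/

import Mathlib

open MvPolynomial Matrix

lemma eval_deg_lt_two (P : MvPolynomial (Fin 2) ℝ) (h : P.totalDegree < 2) (w : Fin 2 → ℝ) :
    eval w P = coeff 0 P + coeff (Finsupp.single 0 1) P * w 0 + coeff (Finsupp.single 1 1) P * w 1 := by
  have hsub : P.support ⊆ {0, Finsupp.single 0 1, Finsupp.single 1 1} := by
    intro d hd
    have hle : d 0 + d 1 ≤ 1 := by
      have h1 : (d.sum fun _ n => n) ≤ P.totalDegree := MvPolynomial.le_totalDegree hd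
      have h2 : (d.sum fun _ n => n) = d 0 + d 1 := by
        rw [Finsupp.sum_fintype _ _ (fun _ => rfl), Fin.sum_univ_two]
      omega
    simp only [Finset.mem_insert, Finset.mem_singleton]
    rcases Nat.lt_or_ge (d 0) 1 with h0 | h0
    · rcases Nat.lt_or_ge (d 1) 1 with h1 | h1
      · left; ext i; fin_cases i <;> simp <;> omega
      · right; right; ext i; fin_cases i <;> simp [Finsupp.single_apply] <;> omega
    · right; left; ext i; fin_cases i <;> simp [Finsupp.single_apply] <;> omega
  have h01 : (Finsupp.single 0 1 : Fin 2 →₀ ℕ) ≠ Finsupp.single 1 1 := by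
    intro h; have := DFunLike.congr_fun h 0; simp at this
  have h00 : (0 : Fin 2 →₀ ℕ) ≠ Finsupp.single 0 1 := by
    intro h; have := DFunLike.congr_fun h 0; simp at this
  have h02 : (0 : Fin 2 →₀ ℕ) ≠ Finsupp.single 1 1 := by
    intro h; have := DFunLike.congr_fun h 1; simp at this
  rw [eval_eq, Finset.sum_subset hsub (by
    intro d _ hd
    rw [MvPolynomial.notMem_support_iff.mp hd, zero_mul])]
  rw [Finset.sum_insert (by simp [h00, h02]), Finset.sum_insert (by simp [h01]),
    Finset.sum_singleton]
  simp [Fin.prod_univ_two, Finsupp.single_apply]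
  ring

/-- The stabilizer in `O(2)` of a polynomial `P`, for the action
`(φ·P)(x,y) = P(φ⁻¹(x,y))`. -/
def polyStab (P : MvPolynomial (Fin 2) ℝ) : Set (Matrix (Fin 2) (Fin 2) ℝ) :=
  {A | A * Aᵀ = 1 ∧ ∀ v : Fin 2 → ℝ, eval (A.mulVec v) P = eval v P}

/-- The stabilizer in `O(2)` of the polynomial `x + xy` is trivial, and no
polynomial of degree `< 2` has trivial stabilizer in `O(2)`. -/
theorem stmt9 :
    polyStab (X 0 + X 0 * X 1) = {(1 : Matrix (Fin 2) (Fin 2) ℝ)} ∧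
      ∀ P : MvPolynomial (Fin 2) ℝ, P.totalDegree < 2 →
        polyStab P ≠ {(1 : Matrix (Fin 2) (Fin 2) ℝ)} := by
  constructor
  · ext A
    simp only [polyStab, Set.mem_setOf_eq, Set.mem_singleton_iff]
    constructor
    · rintro ⟨-, hev⟩
      have key : ∀ v : Fin 2 → ℝ,
          (A 0 0 * v 0 + A 0 1 * v 1) + (A 0 0 * v 0 + A 0 1 * v 1) * (A 1 0 * v 0 + A 1 1 * v 1)
            = v 0 + v 0 * v 1 := by
        intro v
        have := hev v
        simpa [Matrix.mulVec, dotProduct, Fin.sum_univ_two] using this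
      have e1 := key ![1, 0]
      have e2 := key ![-1, 0]
      have e3 := key ![0, 1]
      have e4 := key ![0, -1]
      have e5 := key ![1, 1]
      simp at e1 e2 e3 e4 e5
      have ha : A 0 0 = 1 := by linarith
      have hc : A 1 0 = 0 := by rw [ha] at e1; linarith
      have hb : A 0 1 = 0 := by linarith
      have hd : A 1 1 = 1 := by rw [ha, hb, hc] at e5; nlinarith [e5]
      rw [Matrix.eta_fin_two A, ha, hb, hc, hd, Matrix.one_fin_two]
    · rintro rfl
      refine ⟨by simp, fun v => by simp [Matrix.one_mulVec]⟩
  · intro P hP hEq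
    have hform := eval_deg_lt_two P hP
    set c := coeff 0 P
    set a := coeff (Finsupp.single 0 1) P
    set b := coeff (Finsupp.single 1 1) P
    by_cases hab : a = 0 ∧ b = 0
    · have hmem : (-1 : Matrix (Fin 2) (Fin 2) ℝ) ∈ polyStab P := by
        refine ⟨by rw [Matrix.transpose_neg, Matrix.transpose_one, neg_mul_neg, one_mul],
          fun v => ?_⟩
        rw [hform, hform, hab.1, hab.2]
        ring
      rw [hEq] at hmem
      have : ((-1 : Matrix (Fin 2) (Fin 2) ℝ)) 0 0 = (1 : Matrix (Fin 2) (Fin 2) ℝ) 0 0 := by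
        rw [hmem]
      simp at this
      norm_num at this
    · have hn : a ^ 2 + b ^ 2 ≠ 0 := by
        intro h
        have ha : a = 0 := by nlinarith [sq_nonneg a, sq_nonneg b]
        have hb : b = 0 := by nlinarith [sq_nonneg a, sq_nonneg b]
        exact hab ⟨ha, hb⟩
      set n := a ^ 2 + b ^ 2 with hndef
      set R : Matrix (Fin 2) (Fin 2) ℝ :=
        !![(a^2 - b^2)/n, 2*a*b/n; 2*a*b/n, (b^2 - a^2)/n] with hR
      have hRT : Rᵀ = R := by
        ext i j
        fin_cases i <;> fin_cases j <;> simp [hR]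
      have hmem : R ∈ polyStab P := by
        constructor
        · rw [hRT, hR, Matrix.mul_fin_two, Matrix.one_fin_two]
          ext i j
          fin_cases i <;> fin_cases j <;> (simp; field_simp; ring)
        · intro v
          rw [hform, hform]
          have h0 : R.mulVec v 0 = ((a^2 - b^2)/n) * v 0 + (2*a*b/n) * v 1 := by
            simp [hR, Matrix.mulVec, dotProduct, Fin.sum_univ_two]
          have h1 : R.mulVec v 1 = (2*a*b/n) * v 0 + ((b^2 - a^2)/n) * v 1 := by
            simp [hR, Matrix.mulVec, dotProduct, Fin.sum_univ_two]
          rw [h0, h1]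
          field_simp
          ring
      rw [hEq] at hmem
      have htr : R 0 0 + R 1 1 = (1 : Matrix (Fin 2) (Fin 2) ℝ) 0 0 + (1 : Matrix (Fin 2) (Fin 2) ℝ) 1 1 := by
        rw [hmem]
      simp [hR] at htr
      rw [← add_div, div_eq_iff hn] at htr
      exact hn (by linarith)
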